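/- arXiv:2403.13080 — 2 statements merged into one kernel-verified Lean document; each statement's English description precedes it below -/
import Mathlib

section
/- Let p be a prime, n a positive integer, and S a subset of 𝔽_p^n with |S| > (p^n − 1)/(p − 1). Then every point P ∈ 𝔽_p^n lies on an affine line passing through two distinct points of S; i.e., there exist distinct v, w ∈ S and t ∈ 𝔽_p such that P = v + t·(w − v). -/
theorem stmt_0 (p : ℕ) (hp : p.Prime) (n : ℕ) (hn : 0 < n)
    (S : Finset (Fin n → ZMod p)) (hS : S.card > (p ^ n - 1) / (p - 1)) :
    ∀ P : Fin n → ZMod p, ∃ v ∈ S, ∃ w ∈ S, v ≠ w ∧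
      ∃ t : ZMod p, P = v + t • (w - v) := by
  haveI : Fact p.Prime := ⟨hp⟩
  intro P
  by_contra hcon
  push_neg at hcon
  -- N := (p^n - 1)/(p-1) ≥ 1
  have hp2 : 2 ≤ p := hp.two_le
  have hdvd : p - 1 ∣ p ^ n - 1 := by
    simpa using Nat.sub_dvd_pow_sub_pow p 1 n
  have hple : p - 1 ≤ p ^ n - 1 := by
    have : p ≤ p ^ n := Nat.le_self_pow hn.ne' p
    omega
  have hN1 : 1 ≤ (p ^ n - 1) / (p - 1) :=
    Nat.one_le_div_iff (by omega) |>.mpr hple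
  have hS2 : 1 < S.card := hN1.trans_lt hS
  -- P ∉ S
  have hPS : P ∉ S := by
    intro hP
    obtain ⟨w, hw, hwP⟩ := Finset.exists_mem_ne hS2 P
    exact hcon P hP w hw (Ne.symm hwP) 0 (by simp)
  -- injective map S × units → nonzero vectors
  have hsub : ∀ s ∈ S, s - P ≠ 0 := by
    intro s hs h0
    apply hPS
    have : s = P := by
      have := sub_eq_zero.mp h0
      exact this
    rwa [this] at hs
  let g : {s // s ∈ S} × (ZMod p)ˣ → {u : Fin n → ZMod p // u ≠ 0} :=
    fun x => ⟨(x.2 : ZMod p) • ((x.1 : Fin n → ZMod p) - P),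
      smul_ne_zero (Units.ne_zero x.2) (hsub x.1 x.1.2)⟩
  have hginj : Function.Injective g := by
    rintro ⟨⟨s, hs⟩, c⟩ ⟨⟨s', hs'⟩, c'⟩ heq
    have heq' : (c : ZMod p) • (s - P) = (c' : ZMod p) • (s' - P) :=
      congrArg Subtype.val heq
    have hss' : s = s' := by
      by_contra hne
      set e : ZMod p := ((c'⁻¹ * c : (ZMod p)ˣ) : ZMod p) with he
      have h1 : s' - P = e • (s - P) := by
        have h := congrArg (fun u => ((c'⁻¹ : (ZMod p)ˣ) : ZMod p) • u) heq'
        simp only [smul_smul, ← Units.val_mul, inv_mul_cancel, Units.val_one,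
          one_smul] at h
        rw [← h, he]
      have he1 : e ≠ 1 := by
        intro h
        apply hne
        rw [h, one_smul] at h1
        exact (sub_left_injective h1.symm)
      refine hcon s hs s' hs' hne ((1 - e)⁻¹) ?_
      have h2 : s' - s = (e - 1) • (s - P) := by
        have hx : s' - s = (s' - P) - (s - P) := by abel
        rw [hx, h1, sub_smul, one_smul]
      have hne0 : (1 : ZMod p) - e ≠ 0 := sub_ne_zero.mpr (Ne.symm he1)
      have h3 : (1 - e)⁻¹ * (e - 1) = -1 := by
        rw [(by ring : e - 1 = -(1 - e)), mul_neg, inv_mul_cancel₀ hne0]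
      rw [h2, smul_smul, h3]
      simp only [neg_one_smul]
      abel
    subst hss'
    have hc : (c : ZMod p) = (c' : ZMod p) := by
      have h0 := hsub s hs
      have : ((c : ZMod p) - c') • (s - P) = 0 := by
        rw [sub_smul, heq', sub_self]
      rcases smul_eq_zero.mp this with h | h
      · exact sub_eq_zero.mp h
      · exact absurd h h0
    simp [Units.ext hc]
  -- cardinality contradiction
  have hcard := Fintype.card_le_of_injective g hginj
  rw [Fintype.card_prod, Fintype.card_coe, ZMod.card_units p] at hcard
  have hcard2 : Fintype.card {u : Fin n → ZMod p // u ≠ 0} = p ^ n - 1 := by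
    rw [Fintype.card_subtype_compl]
    simp [Fintype.card_fun, ZMod.card]
  rw [hcard2] at hcard
  have hdiv : (p ^ n - 1) / (p - 1) * (p - 1) = p ^ n - 1 :=
    Nat.div_mul_cancel hdvd
  have : ((p ^ n - 1) / (p - 1) + 1) * (p - 1) ≤ S.card * (p - 1) :=
    Nat.mul_le_mul_right _ (by omega)
  rw [add_mul, hdiv, one_mul] at this
  omega
end

section
/- Let p be a prime, n a positive integer, and S a subset of 𝔽_p^n with |S| > (p^n − 1)/(p − 1). Then every point Q ∈ 𝔽_p^n can be written as Q = k·v + (p − 1 − k)·w for some v, w ∈ S and some natural number k with 0 ≤ k ≤ p − 1 (where the natural numbers k and p − 1 − k act on 𝔽_p^n by repeated addition, i.e., via their images in ZMod p). -/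
theorem stmt_1 (p : ℕ) (hp : p.Prime) (n : ℕ) (hn : 0 < n)
    (S : Finset (Fin n → ZMod p)) (hS : S.card > (p ^ n - 1) / (p - 1)) :
    ∀ Q : Fin n → ZMod p, ∃ v ∈ S, ∃ w ∈ S, ∃ k : ℕ, k ≤ p - 1 ∧
      Q = k • v + (p - 1 - k) • w := by
  haveI : Fact p.Prime := ⟨hp⟩
  have hp2 : 2 ≤ p := hp.two_le
  have hpm1 : ((p - 1 : ℕ) : ZMod p) = -1 := by
    push_cast [Nat.cast_sub hp.one_le]
    simp
  intro Q
  by_contra hcon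
  push_neg at hcon
  have hSne : S.Nonempty := Finset.card_pos.mp (Nat.lt_of_le_of_lt (Nat.zero_le _) hS)
  obtain ⟨v₀, hv₀⟩ := hSne
  -- every translated point is nonzero
  have hne0 : ∀ w ∈ S, w + Q ≠ 0 := by
    intro w hw h0
    refine hcon v₀ hv₀ w hw 0 (Nat.zero_le _) ?_
    have hwQ : w = -Q := by
      have := h0
      linear_combination (norm := module) h0
    rw [Nat.sub_zero, zero_smul, zero_add, ← Nat.cast_smul_eq_nsmul (ZMod p), hpm1, hwQ]
    module
  -- the injection
  set f : (Fin n → ZMod p) × (ZMod p)ˣ → (Fin n → ZMod p) :=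
    fun x => (x.2 : ZMod p) • (x.1 + Q) with hf
  have hmaps : ∀ x ∈ S ×ˢ (Finset.univ : Finset (ZMod p)ˣ),
      f x ∈ (Finset.univ : Finset (Fin n → ZMod p)).erase 0 := by
    rintro ⟨w, lam⟩ hx
    rw [Finset.mem_product] at hx
    refine Finset.mem_erase.mpr ⟨?_, Finset.mem_univ _⟩
    exact smul_ne_zero lam.ne_zero (hne0 w hx.1)
  have hinj : Set.InjOn f ↑(S ×ˢ (Finset.univ : Finset (ZMod p)ˣ)) := by
    rintro ⟨w₁, l₁⟩ hx₁ ⟨w₂, l₂⟩ hx₂ heq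
    simp only [Finset.mem_coe, Finset.mem_product] at hx₁ hx₂
    simp only [hf] at heq
    by_cases hw : w₁ = w₂
    · subst hw
      have hu : w₁ + Q ≠ 0 := hne0 w₁ hx₁.1
      obtain ⟨i, hi⟩ := Function.ne_iff.mp hu
      have : (l₁ : ZMod p) * (w₁ i + Q i) = (l₂ : ZMod p) * (w₁ i + Q i) := by
        have := congrFun heq i
        simpa using this
      have hl : (l₁ : ZMod p) = (l₂ : ZMod p) := by
        have hi' : w₁ i + Q i ≠ 0 := by simpa using hi
        exact mul_right_cancel₀ hi' this
      exact Prod.ext rfl (Units.ext hl)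
    · exfalso
      -- build a representation of Q, contradicting hcon
      set a : ZMod p := (l₁ : ZMod p)
      set b : ZMod p := (l₂ : ZMod p)
      set c : ZMod p := (b⁻¹ * a - 1)⁻¹ with hcdef
      have hb : b ≠ 0 := l₂.ne_zero
      have hinvb : b⁻¹ * b = 1 := inv_mul_cancel₀ hb
      have hmu : b⁻¹ * a - 1 ≠ 0 := by
        intro h
        apply hw
        have hba : b⁻¹ * a = 1 := by linear_combination h
        have : w₁ + Q = w₂ + Q := by
          have h1 : (b⁻¹ * a) • (w₁ + Q) = (b⁻¹ * b) • (w₂ + Q) := by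
            rw [mul_smul, mul_smul, heq]
          rw [hba, hinvb, one_smul, one_smul] at h1
          exact h1
        funext i
        have := congrFun this i
        simpa using this
      have hc : c * (b⁻¹ * a - 1) = 1 := by
        rw [hcdef]; exact inv_mul_cancel₀ hmu
      have hk : c.val ≤ p - 1 := Nat.le_sub_one_of_lt (ZMod.val_lt c)
      refine hcon w₂ hx₂.1 w₁ hx₁.1 c.val hk ?_
      rw [← Nat.cast_smul_eq_nsmul (ZMod p), ← Nat.cast_smul_eq_nsmul (ZMod p),
        Nat.cast_sub hk, hpm1, ZMod.natCast_val, ZMod.cast_id]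
      funext i
      have hi := congrFun heq i
      simp only [Pi.smul_apply, Pi.add_apply, smul_eq_mul] at hi
      simp only [Pi.add_apply, Pi.smul_apply, smul_eq_mul, Pi.sub_apply, Pi.neg_apply]
      linear_combination (c * b⁻¹) * hi - (w₁ i + Q i) * hc + (c * (w₂ i + Q i)) * hinvb
  have hcard := Finset.card_le_card_of_injOn f hmaps hinj
  rw [Finset.card_product, Finset.card_erase_of_mem (Finset.mem_univ _)] at hcard
  have h1 : (Finset.univ : Finset (ZMod p)ˣ).card = p - 1 := by
    rw [Finset.card_univ, ZMod.card_units_eq_totient, Nat.totient_prime hp]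
  have h2 : (Finset.univ : Finset (Fin n → ZMod p)).card = p ^ n := by
    rw [Finset.card_univ]
    simp [ZMod.card]
  rw [h1, h2] at hcard
  have : S.card ≤ (p ^ n - 1) / (p - 1) := Nat.le_div_iff_mul_le (by omega) |>.mpr hcard
  omega
end
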